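/- Let k ≥ 1 and let ℓ and m be k-subsets. Then ℓ and m are noncrossing if and only if α(ℓ,m) + β(ℓ,m) − |{ℓ_1,…,ℓ_k} ∩ {m_1,…,m_k}| = k. -/

import Mathlib

/-- `α(ℓ,m)`: the largest `p ∈ {1,…,k}` such that `ℓ i ≤ m j` for all `1 ≤ i,j ≤ k`
with `j − i = k − p`, and `0` if no such `p` exists. -/
noncomputable def kAlpha (k : ℕ) (ℓ m : Fin k → ℤ) : ℕ :=
  sSup {p : ℕ | 1 ≤ p ∧ p ≤ k ∧
    ∀ i j : Fin k, (j.val : ℤ) - (i.val : ℤ) = (k : ℤ) - (p : ℤ) → ℓ i ≤ m j}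

/-- `β(ℓ,m)`: the largest `p ∈ {1,…,k}` such that `ℓ i ≥ m j` for all `1 ≤ i,j ≤ k`
with `i − j = k − p`, and `0` if no such `p` exists. -/
noncomputable def kBeta (k : ℕ) (ℓ m : Fin k → ℤ) : ℕ :=
  sSup {p : ℕ | 1 ≤ p ∧ p ≤ k ∧
    ∀ i j : Fin k, (i.val : ℤ) - (j.val : ℤ) = (k : ℤ) - (p : ℤ) → m j ≤ ℓ i}

/-- Two `k`-subsets `ℓ` and `m` cross if there exist `i₁, i₂` in the set of values
of `ℓ` not values of `m`, and `j₁, j₂` in the set of values of `m` not values of `ℓ`,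
with `i₁ < j₁ < i₂ < j₂` or `j₁ < i₁ < j₂ < i₂`. -/
def Crossing (k : ℕ) (ℓ m : Fin k → ℤ) : Prop :=
  ∃ i₁ i₂ j₁ j₂ : ℤ,
    i₁ ∈ Set.range ℓ \ Set.range m ∧ i₂ ∈ Set.range ℓ \ Set.range m ∧
    j₁ ∈ Set.range m \ Set.range ℓ ∧ j₂ ∈ Set.range m \ Set.range ℓ ∧
    ((i₁ < j₁ ∧ j₁ < i₂ ∧ i₂ < j₂) ∨ (j₁ < i₁ ∧ i₁ < j₂ ∧ j₂ < i₂))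

variable {k : ℕ}


/-- count of indices with value ≤ x -/
private def cntF (ℓ : Fin k → ℤ) (x : ℤ) : ℕ :=
  (Finset.univ.filter fun i => ℓ i ≤ x).card

private lemma cntF_le_k (ℓ : Fin k → ℤ) (x : ℤ) : cntF ℓ x ≤ k := by
  simpa [cntF] using (Finset.card_filter_le Finset.univ fun i => ℓ i ≤ x)

private lemma card_val_lt (n : ℕ) :
    (Finset.univ.filter fun j : Fin k => j.val < n).card ≤ n := by
  classical
  calc (Finset.univ.filter fun j : Fin k => j.val < n).card
      = ((Finset.univ.filter fun j : Fin k => j.val < n).image Fin.val).card := by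
        rw [Finset.card_image_of_injective _ Fin.val_injective]
    _ ≤ (Finset.range n).card := by
        apply Finset.card_le_card
        intro a ha
        simp only [Finset.mem_image, Finset.mem_filter] at ha
        obtain ⟨j, ⟨_, hj⟩, rfl⟩ := ha
        simpa using hj
    _ = n := Finset.card_range n

private lemma lower_mem {ℓ : Fin k → ℤ} (hℓ : StrictMono ℓ) (x : ℤ) (j : Fin k) :
    j.val + 1 ≤ cntF ℓ x ↔ ℓ j ≤ x := by
  constructor
  · intro h
    by_contra hx
    push_neg at hx
    have hsub : (Finset.univ.filter fun i => ℓ i ≤ x) ⊆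
        (Finset.univ.filter fun i : Fin k => i.val < j.val) := by
      intro i hi
      simp only [Finset.mem_filter, Finset.mem_univ, true_and] at hi ⊢
      have : ℓ i < ℓ j := lt_of_le_of_lt hi hx
      exact hℓ.lt_iff_lt.mp this
    have := le_trans (Finset.card_le_card hsub) (card_val_lt j.val)
    simp only [cntF] at h
    omega
  · intro h
    have hsub : Finset.Iic j ⊆ (Finset.univ.filter fun i => ℓ i ≤ x) := by
      intro i hi
      simp only [Finset.mem_Iic] at hi
      simp only [Finset.mem_filter, Finset.mem_univ, true_and]
      exact le_trans (hℓ.monotone hi) h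
    have := Finset.card_le_card hsub
    simpa [Fin.card_Iic, cntF] using this

/-- the shift condition is equivalent to a counting condition -/
private lemma shift_iff {ℓ m : Fin k → ℤ} (hℓ : StrictMono ℓ) (hm : StrictMono m) (d : ℕ) :
    (∀ i j : Fin k, (j.val : ℤ) - (i.val : ℤ) = (d : ℤ) → ℓ i ≤ m j) ↔
      ∀ x : ℤ, cntF m x ≤ cntF ℓ x + d := by
  constructor
  · intro hP x
    set t := cntF m x with ht
    rcases le_or_gt t d with h | h
    · omega
    · have htk : t ≤ k := cntF_le_k m x
      have ht1 : 1 ≤ t := by omega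
      set j : Fin k := ⟨t - 1, by omega⟩ with hj
      have hmj : m j ≤ x := by
        rw [← lower_mem hm x j]
        simp only [hj]
        omega
      set i : Fin k := ⟨t - 1 - d, by omega⟩ with hi
      have hij : (j.val : ℤ) - (i.val : ℤ) = (d : ℤ) := by
        simp only [hi, hj]
        push_cast [Nat.cast_sub (by omega : d ≤ t - 1), Nat.cast_sub (by omega : 1 ≤ t)]
        ring
      have hle : ℓ i ≤ x := le_trans (hP i j hij) hmj
      have := (lower_mem hℓ x i).mpr hle
      simp only [hi] at this
      omega
  · intro hQ i j hij
    have hji : j.val = i.val + d := by omega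
    have h1 : j.val + 1 ≤ cntF m (m j) := (lower_mem hm (m j) j).mpr le_rfl
    have h2 := hQ (m j)
    have h3 : i.val + 1 ≤ cntF ℓ (m j) := by omega
    exact (lower_mem hℓ (m j) i).mp h3

private noncomputable def AInf (ℓ m : Fin k → ℤ) : ℕ :=
  sInf {d : ℕ | ∀ x : ℤ, cntF m x ≤ cntF ℓ x + d}

private lemma AInf_set_nonempty (ℓ m : Fin k → ℤ) :
    {d : ℕ | ∀ x : ℤ, cntF m x ≤ cntF ℓ x + d}.Nonempty :=
  ⟨k, fun x => le_trans (cntF_le_k m x) (by omega)⟩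

private lemma AInf_le_k (ℓ m : Fin k → ℤ) : AInf ℓ m ≤ k :=
  Nat.sInf_le fun x => le_trans (cntF_le_k m x) (by omega)

private lemma AInf_spec (ℓ m : Fin k → ℤ) (x : ℤ) :
    cntF m x ≤ cntF ℓ x + AInf ℓ m :=
  (Nat.sInf_mem (AInf_set_nonempty ℓ m)) x

private lemma AInf_mem_iff (ℓ m : Fin k → ℤ) (d : ℕ) :
    (∀ x : ℤ, cntF m x ≤ cntF ℓ x + d) ↔ AInf ℓ m ≤ d := by
  constructor
  · intro h; exact Nat.sInf_le h
  · intro h x; exact le_trans (AInf_spec ℓ m x) (by omega)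

private lemma sSup_seg (n : ℕ) : sSup {p : ℕ | 1 ≤ p ∧ p ≤ n} = n := by
  rcases Nat.eq_zero_or_pos n with rfl | hn
  · rw [show {p : ℕ | 1 ≤ p ∧ p ≤ 0} = ∅ from Set.eq_empty_iff_forall_notMem.mpr
      (fun p hp => by have := hp.1; have := hp.2; omega)]
    exact csSup_empty
  · apply le_antisymm
    · exact csSup_le ⟨n, by omega, le_rfl⟩ fun p hp => hp.2
    · exact le_csSup ⟨n, fun p hp => hp.2⟩ ⟨hn, le_rfl⟩

private lemma kAlpha_eq (ℓ m : Fin k → ℤ) (hℓ : StrictMono ℓ) (hm : StrictMono m) :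
    kAlpha k ℓ m = k - AInf ℓ m := by
  have hA := AInf_le_k ℓ m
  have hset : {p : ℕ | 1 ≤ p ∧ p ≤ k ∧
      ∀ i j : Fin k, (j.val : ℤ) - (i.val : ℤ) = (k : ℤ) - (p : ℤ) → ℓ i ≤ m j}
      = {p : ℕ | 1 ≤ p ∧ p ≤ k - AInf ℓ m} := by
    ext p
    simp only [Set.mem_setOf_eq]
    constructor
    · rintro ⟨h1, h2, h3⟩
      refine ⟨h1, ?_⟩
      have : (∀ i j : Fin k, (j.val : ℤ) - (i.val : ℤ) = ((k - p : ℕ) : ℤ) → ℓ i ≤ m j) := by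
        intro i j hij
        apply h3 i j
        omega
      have := (AInf_mem_iff ℓ m (k - p)).mp ((shift_iff hℓ hm (k - p)).mp this)
      omega
    · rintro ⟨h1, h2⟩
      refine ⟨h1, by omega, ?_⟩
      have hle : AInf ℓ m ≤ k - p := by omega
      have := (shift_iff hℓ hm (k - p)).mpr ((AInf_mem_iff ℓ m (k - p)).mpr hle)
      intro i j hij
      apply this i j
      omega
  rw [kAlpha, hset, sSup_seg]

private lemma kBeta_eq (ℓ m : Fin k → ℤ) (hℓ : StrictMono ℓ) (hm : StrictMono m) :
    kBeta k ℓ m = k - AInf m ℓ := by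
  have hA := AInf_le_k m ℓ
  have hset : {p : ℕ | 1 ≤ p ∧ p ≤ k ∧
      ∀ i j : Fin k, (i.val : ℤ) - (j.val : ℤ) = (k : ℤ) - (p : ℤ) → m j ≤ ℓ i}
      = {p : ℕ | 1 ≤ p ∧ p ≤ k - AInf m ℓ} := by
    ext p
    simp only [Set.mem_setOf_eq]
    constructor
    · rintro ⟨h1, h2, h3⟩
      refine ⟨h1, ?_⟩
      have : (∀ i j : Fin k, (j.val : ℤ) - (i.val : ℤ) = ((k - p : ℕ) : ℤ) → m i ≤ ℓ j) := by
        intro i j hij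
        apply h3 j i
        omega
      have := (AInf_mem_iff m ℓ (k - p)).mp ((shift_iff hm hℓ (k - p)).mp this)
      omega
    · rintro ⟨h1, h2⟩
      refine ⟨h1, by omega, ?_⟩
      have hle : AInf m ℓ ≤ k - p := by omega
      have := (shift_iff hm hℓ (k - p)).mpr ((AInf_mem_iff m ℓ (k - p)).mpr hle)
      intro i j hij
      apply this j i
      omega
  rw [kBeta, hset, sSup_seg]

private def cnt (S : Finset ℤ) (x : ℤ) : ℕ := (S.filter (· ≤ x)).card

private def icnt (S : Finset ℤ) (u v : ℤ) : ℕ :=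
  (S.filter fun a => u < a ∧ a ≤ v).card

private lemma cnt_split (S : Finset ℤ) {u v : ℤ} (h : u ≤ v) :
    cnt S v = cnt S u + icnt S u v := by
  classical
  unfold cnt icnt
  have heq : Finset.filter (fun x => x ≤ v) S =
      Finset.filter (fun x => x ≤ u) S ∪ Finset.filter (fun a => u < a ∧ a ≤ v) S := by
    ext a
    simp only [Finset.mem_filter, Finset.mem_union]
    constructor
    · rintro ⟨ha, hv⟩
      by_cases hau : a ≤ u
      · exact Or.inl ⟨ha, hau⟩
      · exact Or.inr ⟨ha, by omega, hv⟩
    · rintro (⟨ha, hau⟩ | ⟨ha, _, hv⟩)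
      · exact ⟨ha, le_trans hau h⟩
      · exact ⟨ha, hv⟩
  have hdisj : Disjoint (Finset.filter (fun x => x ≤ u) S)
      (Finset.filter (fun a => u < a ∧ a ≤ v) S) := by
    rw [Finset.disjoint_left]
    intro a ha hb
    simp only [Finset.mem_filter] at ha hb
    omega
  rw [heq, Finset.card_union_of_disjoint hdisj]

private lemma filter_partition (S T : Finset ℤ) (p : ℤ → Prop) [DecidablePred p] :
    (S.filter p).card = ((S \ T).filter p).card + ((S ∩ T).filter p).card := by
  classical
  rw [← Finset.card_union_of_disjoint, ← Finset.filter_union,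
    Finset.sdiff_union_inter]
  exact Finset.disjoint_filter_filter (Finset.disjoint_sdiff_inter S T)

private lemma memLF {ℓ : Fin k → ℤ} {a : ℤ} :
    a ∈ Finset.univ.image ℓ ↔ a ∈ Set.range ℓ := by
  simp [Finset.mem_image, Set.mem_range]

private lemma crossing_symm {ℓ m : Fin k → ℤ} (h : Crossing k ℓ m) : Crossing k m ℓ := by
  obtain ⟨i₁, i₂, j₁, j₂, h1, h2, h3, h4, h5 | h5⟩ := h
  · exact ⟨j₁, j₂, i₁, i₂, h3, h4, h1, h2, Or.inr ⟨h5.1, h5.2.1, h5.2.2⟩⟩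
  · exact ⟨j₁, j₂, i₁, i₂, h3, h4, h1, h2, Or.inl ⟨h5.1, h5.2.1, h5.2.2⟩⟩

private lemma noncross_of_squeeze (ℓ m : Fin k → ℤ) (u v : ℤ)
    (hL : ∀ a ∈ Finset.univ.image ℓ \ Finset.univ.image m, u < a ∧ a ≤ v)
    (hM : ∀ b ∈ Finset.univ.image m \ Finset.univ.image ℓ, ¬(u < b ∧ b ≤ v)) :
    ¬ Crossing k ℓ m := by
  rintro ⟨i₁, i₂, j₁, j₂, h1, h2, h3, h4, h5 | h5⟩
  · have hi₁ := hL i₁ (by rw [Finset.mem_sdiff, memLF, memLF]; exact h1)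
    have hi₂ := hL i₂ (by rw [Finset.mem_sdiff, memLF, memLF]; exact h2)
    exact hM j₁ (by rw [Finset.mem_sdiff, memLF, memLF]; exact h3)
      ⟨lt_trans hi₁.1 h5.1, le_trans (le_of_lt h5.2.1) hi₂.2⟩
  · have hi₁ := hL i₁ (by rw [Finset.mem_sdiff, memLF, memLF]; exact h1)
    have hi₂ := hL i₂ (by rw [Finset.mem_sdiff, memLF, memLF]; exact h2)
    exact hM j₂ (by rw [Finset.mem_sdiff, memLF, memLF]; exact h4)
      ⟨lt_trans hi₁.1 h5.2.1, le_of_lt (lt_of_lt_of_le h5.2.2 hi₂.2)⟩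

private lemma cntF_eq_cnt {ℓ : Fin k → ℤ} (hℓ : Function.Injective ℓ) (x : ℤ) :
    cntF ℓ x = cnt (Finset.univ.image ℓ) x := by
  unfold cntF cnt
  have himg : (Finset.univ.image ℓ).filter (· ≤ x)
      = (Finset.univ.filter fun i => ℓ i ≤ x).image ℓ := by
    ext a
    simp only [Finset.mem_filter, Finset.mem_image, Finset.mem_univ, true_and]
    constructor
    · rintro ⟨⟨i, rfl⟩, h⟩; exact ⟨i, h, rfl⟩
    · rintro ⟨i, h, rfl⟩; exact ⟨⟨i, rfl⟩, h⟩
  rw [himg, Finset.card_image_of_injective _ hℓ]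

private lemma card_image_k {ℓ : Fin k → ℤ} (hℓ : Function.Injective ℓ) :
    (Finset.univ.image ℓ).card = k := by
  rw [Finset.card_image_of_injective _ hℓ, Finset.card_univ, Fintype.card_fin]

private lemma exists_wit (hk : 1 ≤ k) {ℓ m : Fin k → ℤ} (hℓ : StrictMono ℓ)
    (hm : StrictMono m) : ∃ x : ℤ, cntF ℓ x + AInf ℓ m ≤ cntF m x := by
  rcases Nat.eq_zero_or_pos (AInf ℓ m) with h0 | h1
  · refine ⟨min (ℓ ⟨0, hk⟩) (m ⟨0, hk⟩) - 1, ?_⟩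
    have hL : cntF ℓ (min (ℓ ⟨0, hk⟩) (m ⟨0, hk⟩) - 1) = 0 := by
      rw [cntF, Finset.card_eq_zero, Finset.filter_eq_empty_iff]
      intro i _
      have h1 : ℓ ⟨0, hk⟩ ≤ ℓ i := hℓ.monotone (by simp [Fin.le_def])
      have h2 : min (ℓ ⟨0, hk⟩) (m ⟨0, hk⟩) ≤ ℓ ⟨0, hk⟩ := min_le_left _ _
      omega
    omega
  · have hrfl : sInf {d : ℕ | ∀ x : ℤ, cntF m x ≤ cntF ℓ x + d} = AInf ℓ m := rfl
    have hnot : AInf ℓ m - 1 ∉ {d : ℕ | ∀ x : ℤ, cntF m x ≤ cntF ℓ x + d} :=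
      Nat.notMem_of_lt_sInf (by rw [hrfl]; omega)
    simp only [Set.mem_setOf_eq, not_forall, not_le] at hnot
    obtain ⟨x, hx⟩ := hnot
    exact ⟨x, by omega⟩

private lemma gap_le (S T : Finset ℤ) {u v : ℤ} (h : u ≤ v) :
    (cnt S v : ℤ) - cnt S u - ((cnt T v : ℤ) - cnt T u) ≤ ((S \ T).card : ℤ) := by
  classical
  have s1 := cnt_split S h
  have s2 := cnt_split T h
  have e1 : icnt S u v = (S.filter fun a => u < a ∧ a ≤ v).card := rfl
  have e2 : icnt T u v = (T.filter fun a => u < a ∧ a ≤ v).card := rfl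
  have hb1 := filter_partition S T (fun a => u < a ∧ a ≤ v)
  have hb2 : ((S ∩ T).filter fun a => u < a ∧ a ≤ v).card
      ≤ (T.filter fun a => u < a ∧ a ≤ v).card :=
    Finset.card_le_card (Finset.filter_subset_filter _ Finset.inter_subset_right)
  have hb3 : ((S \ T).filter fun a => u < a ∧ a ≤ v).card ≤ (S \ T).card :=
    Finset.card_filter_le _ _
  omega

private lemma gap_eq (S T : Finset ℤ) {u v : ℤ} (h : u ≤ v)
    (hg : ((S \ T).card : ℤ) ≤ (cnt S v : ℤ) - cnt S u - ((cnt T v : ℤ) - cnt T u)) :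
    (∀ a ∈ S \ T, u < a ∧ a ≤ v) ∧ (∀ b ∈ T \ S, ¬(u < b ∧ b ≤ v)) := by
  classical
  have s1 := cnt_split S h
  have s2 := cnt_split T h
  have e1 : icnt S u v = (S.filter fun a => u < a ∧ a ≤ v).card := rfl
  have e2 : icnt T u v = (T.filter fun a => u < a ∧ a ≤ v).card := rfl
  have hb1 := filter_partition S T (fun a => u < a ∧ a ≤ v)
  have hb2 := filter_partition T S (fun a => u < a ∧ a ≤ v)
  have hcomm : ((S ∩ T).filter fun a => u < a ∧ a ≤ v).card
      = ((T ∩ S).filter fun a => u < a ∧ a ≤ v).card := by rw [Finset.inter_comm]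
  have hb3 : ((S \ T).filter fun a => u < a ∧ a ≤ v).card ≤ (S \ T).card :=
    Finset.card_filter_le _ _
  have h1 : (S \ T).card ≤ ((S \ T).filter fun a => u < a ∧ a ≤ v).card := by omega
  have h2 : ((T \ S).filter fun a => u < a ∧ a ≤ v).card = 0 := by omega
  constructor
  · intro a ha
    have heq := Finset.eq_of_subset_of_card_le
      (Finset.filter_subset (fun a => u < a ∧ a ≤ v) (S \ T)) h1
    rw [← heq] at ha
    exact (Finset.mem_filter.mp ha).2
  · intro b hb hPb
    have : b ∈ (T \ S).filter fun a => u < a ∧ a ≤ v := Finset.mem_filter.mpr ⟨hb, hPb⟩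
    rw [Finset.card_eq_zero.mp h2] at this
    exact absurd this (Finset.notMem_empty b)

private lemma half (ℓ m : Fin k → ℤ) {u v : ℤ} (huv : u ≤ v)
    (hg : (((Finset.univ.image ℓ) \ (Finset.univ.image m)).card : ℤ)
      ≤ (cnt (Finset.univ.image ℓ) v : ℤ) - cnt (Finset.univ.image ℓ) u
        - ((cnt (Finset.univ.image m) v : ℤ) - cnt (Finset.univ.image m) u)) :
    ¬ Crossing k ℓ m := by
  obtain ⟨hL, hM⟩ := gap_eq _ _ huv hg
  exact noncross_of_squeeze ℓ m u v hL hM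

private lemma sum_le (hk : 1 ≤ k) {ℓ m : Fin k → ℤ} (hℓ : StrictMono ℓ)
    (hm : StrictMono m) :
    (AInf ℓ m : ℤ) + AInf m ℓ
      + ((Finset.univ.image ℓ ∩ Finset.univ.image m).card : ℤ) ≤ k := by
  classical
  obtain ⟨xA, hxA⟩ := exists_wit hk hℓ hm
  obtain ⟨xB, hxB⟩ := exists_wit hk hm hℓ
  rw [cntF_eq_cnt hℓ.injective, cntF_eq_cnt hm.injective] at hxA
  rw [cntF_eq_cnt hm.injective, cntF_eq_cnt hℓ.injective] at hxB
  have hds := Finset.card_sdiff_add_card_inter (Finset.univ.image ℓ) (Finset.univ.image m)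
  have hds' := Finset.card_sdiff_add_card_inter (Finset.univ.image m) (Finset.univ.image ℓ)
  have hcomm : (Finset.univ.image m ∩ Finset.univ.image ℓ).card
      = (Finset.univ.image ℓ ∩ Finset.univ.image m).card := by rw [Finset.inter_comm]
  have cL := card_image_k hℓ.injective
  have cM := card_image_k hm.injective
  rcases le_total xA xB with h | h
  · have := gap_le (Finset.univ.image ℓ) (Finset.univ.image m) h
    omega
  · have := gap_le (Finset.univ.image m) (Finset.univ.image ℓ) h
    omega

private lemma noncross_of_sum (hk : 1 ≤ k) {ℓ m : Fin k → ℤ} (hℓ : StrictMono ℓ)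
    (hm : StrictMono m)
    (hsum : (k : ℤ) ≤ (AInf ℓ m : ℤ) + AInf m ℓ
      + ((Finset.univ.image ℓ ∩ Finset.univ.image m).card : ℤ)) :
    ¬ Crossing k ℓ m := by
  classical
  obtain ⟨xA, hxA⟩ := exists_wit hk hℓ hm
  obtain ⟨xB, hxB⟩ := exists_wit hk hm hℓ
  rw [cntF_eq_cnt hℓ.injective, cntF_eq_cnt hm.injective] at hxA
  rw [cntF_eq_cnt hm.injective, cntF_eq_cnt hℓ.injective] at hxB
  have hds := Finset.card_sdiff_add_card_inter (Finset.univ.image ℓ) (Finset.univ.image m)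
  have hds' := Finset.card_sdiff_add_card_inter (Finset.univ.image m) (Finset.univ.image ℓ)
  have hcomm : (Finset.univ.image m ∩ Finset.univ.image ℓ).card
      = (Finset.univ.image ℓ ∩ Finset.univ.image m).card := by rw [Finset.inter_comm]
  have cL := card_image_k hℓ.injective
  have cM := card_image_k hm.injective
  rcases le_total xA xB with h | h
  · exact half ℓ m h (by omega)
  · intro hc
    exact half m ℓ h (by omega) (crossing_symm hc)

private lemma third_core {ℓ m : Fin k → ℤ} (hnc : ¬ Crossing k ℓ m)
    (hne : ((Finset.univ.image m) \ (Finset.univ.image ℓ)).Nonempty)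
    (hz : ∃ z ∈ (Finset.univ.image ℓ) \ (Finset.univ.image m),
      ∀ w ∈ (Finset.univ.image m) \ (Finset.univ.image ℓ), z < w) :
    ∃ x y : ℤ, (((Finset.univ.image m) \ (Finset.univ.image ℓ)).card : ℤ)
      ≤ ((cnt (Finset.univ.image m) y : ℤ) - cnt (Finset.univ.image ℓ) y)
        - ((cnt (Finset.univ.image m) x : ℤ) - cnt (Finset.univ.image ℓ) x) := by
  classical
  set L := Finset.univ.image ℓ with hLdef
  set M := Finset.univ.image m with hMdef
  obtain ⟨z, hzL, hzlt⟩ := hz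
  set μ := (M \ L).min' hne with hμdef
  set ν := (M \ L).max' hne with hνdef
  have hμν : μ ≤ ν := Finset.min'_le _ _ (Finset.max'_mem _ _)
  refine ⟨μ - 1, ν, ?_⟩
  have s1 := cnt_split L (show μ - 1 ≤ ν by omega)
  have s2 := cnt_split M (show μ - 1 ≤ ν by omega)
  have e1 : icnt L (μ-1) ν = (L.filter fun a => μ - 1 < a ∧ a ≤ ν).card := rfl
  have e2 : icnt M (μ-1) ν = (M.filter fun a => μ - 1 < a ∧ a ≤ ν).card := rfl
  have hMsub : (M \ L) ∪ ((M ∩ L).filter fun a => μ - 1 < a ∧ a ≤ ν)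
      ⊆ M.filter fun a => μ - 1 < a ∧ a ≤ ν := by
    intro b hb
    rcases Finset.mem_union.mp hb with hb | hb
    · refine Finset.mem_filter.mpr ⟨(Finset.mem_sdiff.mp hb).1, ?_, Finset.le_max' _ _ hb⟩
      have := Finset.min'_le _ _ hb
      omega
    · obtain ⟨hb1, hb2⟩ := Finset.mem_filter.mp hb
      exact Finset.mem_filter.mpr ⟨(Finset.mem_inter.mp hb1).1, hb2⟩
  have hMdisj : Disjoint (M \ L) ((M ∩ L).filter fun a => μ - 1 < a ∧ a ≤ ν) := by
    rw [Finset.disjoint_left]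
    intro b hb hb'
    exact (Finset.mem_sdiff.mp hb).2 (Finset.mem_inter.mp (Finset.mem_filter.mp hb').1).2
  have hM : (M \ L).card + ((M ∩ L).filter fun a => μ - 1 < a ∧ a ≤ ν).card
      ≤ (M.filter fun a => μ - 1 < a ∧ a ≤ ν).card := by
    rw [← Finset.card_union_of_disjoint hMdisj]
    exact Finset.card_le_card hMsub
  have hμD := Finset.min'_mem (M \ L) hne
  have hνD := Finset.max'_mem (M \ L) hne
  have hLsub : (L.filter fun a => μ - 1 < a ∧ a ≤ ν)
      ⊆ ((L ∩ M).filter fun a => μ - 1 < a ∧ a ≤ ν) := by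
    intro a ha
    obtain ⟨haL, hPa⟩ := Finset.mem_filter.mp ha
    refine Finset.mem_filter.mpr ⟨Finset.mem_inter.mpr ⟨haL, ?_⟩, hPa⟩
    by_contra haM
    have hμa : μ < a := by
      rcases eq_or_lt_of_le (show μ ≤ a by omega) with rfl | h
      · exact absurd haL (Finset.mem_sdiff.mp hμD).2
      · exact h
    have haν : a < ν := by
      rcases eq_or_lt_of_le hPa.2 with rfl | h
      · exact absurd haL (Finset.mem_sdiff.mp hνD).2
      · exact h
    apply hnc
    have convL : ∀ b ∈ L \ M, b ∈ Set.range ℓ \ Set.range m := by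
      intro b hb
      rw [Finset.mem_sdiff, hLdef, hMdef, memLF, memLF] at hb
      exact ⟨hb.1, hb.2⟩
    have convM : ∀ b ∈ M \ L, b ∈ Set.range m \ Set.range ℓ := by
      intro b hb
      rw [Finset.mem_sdiff, hLdef, hMdef, memLF, memLF] at hb
      exact ⟨hb.1, hb.2⟩
    exact ⟨z, a, μ, ν, convL z hzL,
      convL a (Finset.mem_sdiff.mpr ⟨haL, haM⟩), convM μ hμD, convM ν hνD,
      Or.inl ⟨hzlt μ hμD, hμa, haν⟩⟩
  have hLcard : (L.filter fun a => μ - 1 < a ∧ a ≤ ν).card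
      ≤ ((L ∩ M).filter fun a => μ - 1 < a ∧ a ≤ ν).card := Finset.card_le_card hLsub
  have hcomm : ((L ∩ M).filter fun a => μ - 1 < a ∧ a ≤ ν).card
      = ((M ∩ L).filter fun a => μ - 1 < a ∧ a ≤ ν).card := by rw [Finset.inter_comm]
  omega

private lemma sum_ge {ℓ m : Fin k → ℤ} (hℓ : StrictMono ℓ) (hm : StrictMono m)
    (hnc : ¬ Crossing k ℓ m) :
    (k : ℤ) ≤ (AInf ℓ m : ℤ) + AInf m ℓ
      + ((Finset.univ.image ℓ ∩ Finset.univ.image m).card : ℤ) := by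
  classical
  set L := Finset.univ.image ℓ with hLdef
  set M := Finset.univ.image m with hMdef
  have hds := Finset.card_sdiff_add_card_inter L M
  have hds' := Finset.card_sdiff_add_card_inter M L
  have hcomm : (M ∩ L).card = (L ∩ M).card := by rw [Finset.inter_comm]
  have cL : L.card = k := card_image_k hℓ.injective
  have cM : M.card = k := card_image_k hm.injective
  rcases Finset.eq_empty_or_nonempty (L \ M) with he | hne
  · have : (L \ M).card = 0 := by rw [he]; rfl
    omega
  · have hne' : (M \ L).Nonempty := by
      rw [← Finset.card_pos] at hne ⊢
      omega
    have hD : ((L \ M) ∪ (M \ L)).Nonempty :=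
      ⟨hne.choose, Finset.mem_union_left _ hne.choose_spec⟩
    set z := ((L \ M) ∪ (M \ L)).min' hD with hzdef
    have hzD := Finset.min'_mem ((L \ M) ∪ (M \ L)) hD
    rcases Finset.mem_union.mp hzD with hzL | hzM
    · have hzlt : ∀ w ∈ M \ L, z < w := by
        intro w hw
        have hle := Finset.min'_le _ _ (Finset.mem_union_right (L \ M) hw)
        rcases lt_or_eq_of_le hle with h | heq
        · exact h
        · exfalso
          rw [← heq] at hw
          exact absurd (Finset.mem_sdiff.mp hw).1 (Finset.mem_sdiff.mp hzL).2
      obtain ⟨x, y, hxy⟩ := third_core hnc hne' ⟨z, hzL, hzlt⟩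
      have hA := AInf_spec ℓ m y
      have hB := AInf_spec m ℓ x
      rw [cntF_eq_cnt hm.injective, cntF_eq_cnt hℓ.injective] at hA
      rw [cntF_eq_cnt hℓ.injective, cntF_eq_cnt hm.injective] at hB
      rw [← hLdef, ← hMdef] at hxy hA hB
      omega
    · have hzlt : ∀ w ∈ L \ M, z < w := by
        intro w hw
        have hle := Finset.min'_le _ _ (Finset.mem_union_left (M \ L) hw)
        rcases lt_or_eq_of_le hle with h | heq
        · exact h
        · exfalso
          rw [← heq] at hw
          exact absurd (Finset.mem_sdiff.mp hw).1 (Finset.mem_sdiff.mp hzM).2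
      obtain ⟨x, y, hxy⟩ := third_core (fun hc => hnc (crossing_symm hc)) hne ⟨z, hzM, hzlt⟩
      have hA := AInf_spec ℓ m x
      have hB := AInf_spec m ℓ y
      rw [cntF_eq_cnt hm.injective, cntF_eq_cnt hℓ.injective] at hA
      rw [cntF_eq_cnt hℓ.injective, cntF_eq_cnt hm.injective] at hB
      rw [← hLdef, ← hMdef] at hxy hA hB
      omega

/-- `k`-subsets `ℓ` and `m` are noncrossing if and only if
`α(ℓ,m) + β(ℓ,m) − |{ℓ_1,…,ℓ_k} ∩ {m_1,…,m_k}| = k`. -/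
theorem noncrossing_iff (k : ℕ) (hk : 1 ≤ k) (ℓ m : Fin k → ℤ)
    (hℓ : StrictMono ℓ) (hm : StrictMono m) :
    ¬ Crossing k ℓ m ↔
      (kAlpha k ℓ m : ℤ) + (kBeta k ℓ m : ℤ)
        - ((Finset.univ.image ℓ ∩ Finset.univ.image m).card : ℤ) = (k : ℤ) := by
  classical
  have hA := AInf_le_k ℓ m
  have hB := AInf_le_k m ℓ
  have hα := kAlpha_eq ℓ m hℓ hm
  have hβ := kBeta_eq ℓ m hℓ hm
  have hI := sum_le hk hℓ hm
  constructor
  · intro hnc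
    have hge := sum_ge hℓ hm hnc
    rw [hα, hβ]
    omega
  · intro heq
    rw [hα, hβ] at heq
    exact noncross_of_sum hk hℓ hm (by omega)
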